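/- Markov-type bound on the size of the smoothing set: Let P be a pmf on a countable set 𝒳 with finite Shannon entropy H(P), let 0 < ε < 1, let σ : ℕ → 𝒳 enumerate 𝒳 in decreasing order of probability, and let J = sup{ j ≥ 0 : ∑_{k=1}^{j} P(σ(k)) < 1 − ε }. If J is finite then log(J + 1) ≤ H(P)/ε. -/

import Mathlib

/-- Markov-type bound on the size of the smoothing set: if `σ` enumerates the pmf `P`
in decreasing order and `J` is the largest `j` with `∑_{k<j} P(σ k) < 1 − ε`, then
`log₂(J + 1) ≤ H(P)/ε`. -/
theorem log_smoothing_set_size_le {X : Type*} [Countable X]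
    (P : X → ℝ) (σ : ℕ ≃ X) (ε H : ℝ) (J : ℕ)
    (hP : ∀ x, 0 ≤ P x) (hsum : HasSum P 1)
    (hdec : ∀ m n : ℕ, m ≤ n → P (σ n) ≤ P (σ m))
    (hε0 : 0 < ε) (hε1 : ε < 1)
    (hH : H = ∑' x, P x * Real.logb 2 (1 / P x))
    (hHsum : Summable fun x => P x * Real.logb 2 (1 / P x))
    (hJ1 : ∑ k ∈ Finset.range J, P (σ k) < 1 - ε)
    (hJ2 : 1 - ε ≤ ∑ k ∈ Finset.range (J + 1), P (σ k)) :
    Real.logb 2 ((J : ℝ) + 1) ≤ H / ε := by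
  set g : ℕ → ℝ := fun k => P (σ k) with hgdef
  have hg0 : ∀ k, 0 ≤ g k := fun k => hP _
  have hgsum : HasSum g 1 := (Equiv.hasSum_iff σ).2 hsum
  have hgS : Summable g := hgsum.summable
  have hgtsum : ∑' k, g k = 1 := hgsum.tsum_eq
  have hPle1 : ∀ x, P x ≤ 1 := fun x => le_hasSum hsum x (fun j _ => hP j)
  have hgle1 : ∀ k, g k ≤ 1 := fun k => hPle1 _
  set f : ℕ → ℝ := fun k => g k * Real.logb 2 (1 / g k) with hfdef
  have hfS : Summable f := (Equiv.summable_iff σ).2 hHsum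
  have hftsum : ∑' k, f k = H := by
    rw [hH]; exact σ.tsum_eq fun x => P x * Real.logb 2 (1 / P x)
  have hterm0 : ∀ x, 0 ≤ P x * Real.logb 2 (1 / P x) := by
    intro x
    rcases eq_or_lt_of_le (hP x) with h | h
    · simp [← h]
    · refine mul_nonneg (hP x) (Real.logb_nonneg one_lt_two ?_)
      exact one_le_one_div h (hPle1 x)
  have hf0 : ∀ k, 0 ≤ f k := fun k => hterm0 _
  have hH0 : 0 ≤ H := hftsum ▸ tsum_nonneg hf0
  rcases eq_or_lt_of_le hH0 with hHz | hHpos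
  · -- H = 0 : show J = 0
    have hx0 : ∃ x, P x ≠ 0 := by
      by_contra hc
      push_neg at hc
      have : HasSum P 0 := by
        have : P = fun _ => (0 : ℝ) := funext hc
        rw [this]; exact hasSum_zero
      exact one_ne_zero (hsum.unique this)
    obtain ⟨x0, hx0⟩ := hx0
    have hx0pos : 0 < P x0 := lt_of_le_of_ne (hP x0) (Ne.symm hx0)
    have hxterm : P x0 * Real.logb 2 (1 / P x0) = 0 := by
      have h1 := hHsum.le_tsum x0 (fun j _ => hterm0 j)
      rw [← hH, ← hHz] at h1
      exact le_antisymm h1 (hterm0 x0)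
    have hlog0 : Real.logb 2 (1 / P x0) = 0 := by
      rcases mul_eq_zero.1 hxterm with h | h
      · exact absurd h hx0
      · exact h
    have hPx1 : P x0 = 1 := by
      have := Real.eq_one_of_pos_of_logb_eq_zero one_lt_two
        (by positivity : (0:ℝ) < 1 / P x0) hlog0
      field_simp at this
      linarith
    have hg01 : 1 ≤ g 0 := by
      have := hdec 0 (σ.symm x0) (Nat.zero_le _)
      rw [Equiv.apply_symm_apply, hPx1] at this
      exact this
    have hJ0 : J = 0 := by
      by_contra hJne
      have hJ1' : 1 ≤ J := Nat.one_le_iff_ne_zero.2 hJne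
      have : g 0 ≤ ∑ k ∈ Finset.range J, g k :=
        Finset.single_le_sum (fun i _ => hg0 i)
          (Finset.mem_range.2 (by omega))
      linarith
    subst hJ0
    simp only [Nat.cast_zero, zero_add, Real.logb_one]
    positivity
  · -- H > 0
    set R : ℝ := H / ε with hRdef
    have hRpos : 0 < R := div_pos hHpos hε0
    set t : ℝ := (2 : ℝ) ^ (-R) with htdef
    have htpos : 0 < t := Real.rpow_pos_of_pos two_pos _
    -- Claim: t ≤ g J
    have htJ : t ≤ g J := by
      by_contra hc
      push_neg at hc
      have hheadS : ∑ k ∈ Finset.range J, g k + ∑' k, g (k + J) = 1 := by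
        rw [Summable.sum_add_tsum_nat_add J hgS, hgtsum]
      have htail_gt : ε < ∑' k, g (k + J) := by
        have h2 : 1 - ε ≤ 1 - ε := le_refl _
        linarith
      -- termwise bound : R * g (k+J) ≤ f (k+J)
      have hbound : ∀ k, R * g (k + J) ≤ f (k + J) := by
        intro k
        rcases eq_or_lt_of_le (hg0 (k + J)) with h | h
        · simp [hfdef, ← h]
        · have hle : g (k + J) < t := lt_of_le_of_lt (hdec J (k + J) (Nat.le_add_left _ _)) hc
          have hlt : R < Real.logb 2 (1 / g (k + J)) := by
            have h2R : (0:ℝ) < (2:ℝ) ^ R := Real.rpow_pos_of_pos two_pos R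
            have hti : t = ((2:ℝ) ^ R)⁻¹ := by
              rw [htdef, Real.rpow_neg (by norm_num)]
            have h1 : (2:ℝ) ^ R < 1 / g (k + J) := by
              rw [lt_div_iff₀ h]
              have hg' : g (k + J) < ((2:ℝ) ^ R)⁻¹ := hti ▸ hle
              calc (2:ℝ) ^ R * g (k + J) < (2:ℝ) ^ R * ((2:ℝ) ^ R)⁻¹ := by
                    exact mul_lt_mul_of_pos_left hg' h2R
                _ = 1 := mul_inv_cancel₀ h2R.ne'
            calc R = Real.logb 2 ((2:ℝ) ^ R) :=
                  (Real.logb_rpow two_pos (by norm_num)).symm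
              _ < Real.logb 2 (1 / g (k + J)) :=
                  Real.logb_lt_logb one_lt_two (Real.rpow_pos_of_pos two_pos R) h1
          have := mul_le_mul_of_nonneg_left hlt.le (hg0 (k + J))
          calc R * g (k + J) = g (k + J) * R := mul_comm _ _
            _ ≤ g (k + J) * Real.logb 2 (1 / g (k + J)) := this
            _ = f (k + J) := rfl
      have hgtailS : Summable (fun k => g (k + J)) := (summable_nat_add_iff J).2 hgS
      have hftailS : Summable (fun k => f (k + J)) := (summable_nat_add_iff J).2 hfS
      have hftail_le : ∑' k, f (k + J) ≤ H := by
        have hh := Summable.sum_add_tsum_nat_add J hfS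
        rw [hftsum] at hh
        have : 0 ≤ ∑ k ∈ Finset.range J, f k :=
          Finset.sum_nonneg (fun i _ => hf0 i)
        linarith
      have hchain : R * ∑' k, g (k + J) ≤ H := by
        rw [← tsum_mul_left]
        calc ∑' k, R * g (k + J) ≤ ∑' k, f (k + J) :=
              Summable.tsum_le_tsum hbound (hgtailS.mul_left R) hftailS
          _ ≤ H := hftail_le
      have : ∑' k, g (k + J) ≤ ε := by
        rw [hRdef] at hchain
        have := (div_le_iff₀ hε0).1 (le_refl (H / ε))
        nlinarith [htail_gt, hchain, hε0]
      linarith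
    -- each g k for k ≤ J is ≥ t
    have hsumJ : ((J : ℝ) + 1) * t ≤ 1 := by
      have h1 : ∀ k ∈ Finset.range (J + 1), t ≤ g k := by
        intro k hk
        exact le_trans htJ (hdec k J (by simpa [Nat.lt_succ_iff] using hk))
      have h2 : ((J : ℝ) + 1) * t ≤ ∑ k ∈ Finset.range (J + 1), g k := by
        have := Finset.card_nsmul_le_sum (Finset.range (J + 1)) g t h1
        simpa [nsmul_eq_mul, mul_comm] using this
      have h3 : ∑ k ∈ Finset.range (J + 1), g k ≤ 1 := by
        rw [← hgtsum]
        exact Summable.sum_le_tsum _ (fun i _ => hg0 i) hgS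
      linarith
    have hJle : (J : ℝ) + 1 ≤ (2:ℝ) ^ R := by
      have h4 : (J : ℝ) + 1 ≤ 1 / t := by
        rw [le_div_iff₀ htpos]; linarith
      calc (J : ℝ) + 1 ≤ 1 / t := h4
        _ = (2:ℝ) ^ R := by
            rw [htdef, Real.rpow_neg (by norm_num), one_div, inv_inv]
    calc Real.logb 2 ((J : ℝ) + 1) ≤ Real.logb 2 ((2:ℝ) ^ R) :=
          Real.logb_le_logb_of_le one_lt_two (by positivity) hJle
      _ = R := Real.logb_rpow two_pos (by norm_num)
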